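/- The only rational solution (x, y, z) ∈ ℚ³ of the equation x⁴ − 17z⁴ = 2(y² + 4z²)² is (0, 0, 0); in other words, the Schinzel curve has no rational point. -/
import Mathlib

private lemma isSquare_17_of_forall_prime (n : ℕ)
    (h : ∀ p : ℕ, p.Prime → p ∣ n → IsSquare ((p : ZMod 17))) :
    IsSquare ((n : ZMod 17)) := by
  induction n using Nat.strong_induction_on with
  | _ n ih =>
    rcases eq_or_ne n 0 with rfl | hn0
    · exact ⟨0, by decide⟩
    rcases eq_or_ne n 1 with rfl | hn1
    · exact ⟨1, by decide⟩
    have hp := Nat.minFac_prime hn1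
    obtain ⟨m, hm⟩ := Nat.minFac_dvd n
    have hm0 : m ≠ 0 := by rintro rfl; simp at hm; exact hn0 hm
    have h2 := hp.two_le
    have hmlt : m < n := by
      have hm1 : 1 ≤ m := Nat.one_le_iff_ne_zero.mpr hm0
      nlinarith [hm, h2, hm1]
    have hs1 := h n.minFac hp (Dvd.intro m hm.symm)
    have hs2 := ih m hmlt (fun p pp pd => h p pp (hm ▸ pd.mul_left _))
    rw [hm]
    push_cast
    exact hs1.mul hs2

private lemma seventeen_eq_zero : (17 : ZMod 17) = 0 := by decide

private lemma isSquare_two_mod17 : IsSquare ((2 : ℕ) : ZMod 17) := ⟨(6 : ZMod 17), by decide⟩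

private lemma two_not_fourth_power : ∀ u : ZMod 17, u ^ 4 ≠ 2 := by decide

private lemma isSquare_p_mod17 (p : ℕ) (pp : p.Prime) (h2 : p ≠ 2)
    (hs : IsSquare ((17 : ℕ) : ZMod p)) : IsSquare ((p : ℕ) : ZMod 17) := by
  haveI : Fact p.Prime := ⟨pp⟩
  haveI : Fact (Nat.Prime 17) := ⟨by norm_num⟩
  exact (ZMod.exists_sq_eq_prime_iff_of_mod_four_eq_one (p := 17) (q := p)
    (by norm_num) h2).mpr hs

/-- Key integer lemma: `X⁴ − 17 Z⁴ = 2 W²` forces `W = 0`. -/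
private lemma schinzel_int (n : ℕ) :
    ∀ W X Z : ℤ, W.natAbs = n → X ^ 4 - 17 * Z ^ 4 = 2 * W ^ 2 → W = 0 := by
  induction n using Nat.strong_induction_on with
  | _ n ih =>
  intro W X Z hn h
  by_contra hW0
  by_cases hcom : ∃ p : ℤ, Prime p ∧ p ∣ X ∧ p ∣ Z
  · -- a common prime divides X and Z; descend
    obtain ⟨p, pp, ⟨a, ha⟩, ⟨b, hb⟩⟩ := hcom
    have hdvd4 : p ^ 4 ∣ 2 * W ^ 2 := ⟨a ^ 4 - 17 * b ^ 4, by rw [← h, ha, hb]; ring⟩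
    set q : ℕ := p.natAbs with hq
    have qp : q.Prime := Int.prime_iff_natAbs_prime.mp pp
    have hdvd4' : q ^ 4 ∣ 2 * W.natAbs ^ 2 := by
      have := Int.natAbs_dvd_natAbs.mpr hdvd4
      simpa [Int.natAbs_mul, Int.natAbs_pow] using this
    have hq2 : q ^ 2 ∣ W.natAbs := by
      by_cases hq2' : q = 2
      · -- 16 ∣ 2 w²  →  4 ∣ w
        rw [hq2'] at hdvd4' ⊢
        set w := W.natAbs
        have h8 : 8 ∣ w ^ 2 := by
          obtain ⟨c, hc⟩ := hdvd4'
          exact ⟨c, by omega⟩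
        have hw2 : 2 ∣ w := Nat.Prime.dvd_of_dvd_pow (by norm_num)
          (dvd_trans (by norm_num) h8)
        obtain ⟨v, hv⟩ := hw2
        have h2v : 2 ∣ v := by
          apply Nat.Prime.dvd_of_dvd_pow (p := 2) (n := 2) (by norm_num)
          obtain ⟨c, hc⟩ := h8
          refine ⟨c, ?_⟩
          have hx : (2 * v) ^ 2 = 8 * c := by rw [← hv]; exact hc
          nlinarith
        obtain ⟨u, hu⟩ := h2v
        exact ⟨u, by omega⟩
      · -- q odd: q⁴ ∣ w² hence q² ∣ w
        have hcop2 : Nat.Coprime (q ^ 4) 2 :=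
          Nat.Coprime.pow_left _ ((Nat.coprime_primes qp (by norm_num)).mpr hq2')
        have h1 : q ^ 4 ∣ W.natAbs ^ 2 := Nat.Coprime.dvd_of_dvd_mul_left hcop2 hdvd4'
        have h2 : (q ^ 2) ^ 2 ∣ W.natAbs ^ 2 := by
          convert h1 using 1; ring
        exact (Nat.pow_dvd_pow_iff (by norm_num)).mp h2
    have hpW : p ^ 2 ∣ W := by
      have h1 : ((q : ℤ)) ^ 2 ∣ W := by
        have h2 : ((q ^ 2 : ℕ) : ℤ) ∣ W := Int.natAbs_dvd_natAbs.mp (by simpa only [Int.natAbs_natCast] using hq2)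
        push_cast at h2
        exact h2
      have hsq : p ^ 2 = ((q : ℤ)) ^ 2 := by
        rcases Int.natAbs_eq p with hp' | hp' <;> rw [← hq] at hp' <;> rw [hp'] <;> ring
      rw [hsq]
      exact h1
    obtain ⟨c, hc⟩ := hpW
    have hp0 : p ≠ 0 := pp.ne_zero
    have heq : a ^ 4 - 17 * b ^ 4 = 2 * c ^ 2 := by
      have h4 : p ^ 4 * (a ^ 4 - 17 * b ^ 4) = p ^ 4 * (2 * c ^ 2) := by
        have h5 := h
        rw [ha, hb, hc] at h5
        linear_combination h5
      exact mul_left_cancel₀ (pow_ne_zero 4 hp0) h4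
    have hc0 : c ≠ 0 := by rintro rfl; simp at hc; exact hW0 hc
    have hlt : c.natAbs < n := by
      rw [← hn, hc]
      have h2q : 2 ≤ q := qp.two_le
      have habs : (p ^ 2 * c).natAbs = q ^ 2 * c.natAbs := by
        rw [Int.natAbs_mul, Int.natAbs_pow]
      rw [habs]
      have hc1 : 1 ≤ c.natAbs := Nat.one_le_iff_ne_zero.mpr (Int.natAbs_ne_zero.mpr hc0)
      have hq4 : 4 ≤ q ^ 2 := by nlinarith
      nlinarith
    exact hc0 (ih c.natAbs hlt c a b rfl heq)
  · -- X and Z have no common prime factor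
    push_neg at hcom
    haveI : Fact (Nat.Prime 17) := ⟨by norm_num⟩
    have hmod : ((X : ZMod 17)) ^ 4 = 2 * ((W : ZMod 17)) ^ 2 := by
      have hc := congrArg (fun t : ℤ => ((t : ZMod 17))) h
      push_cast at hc
      have h0 := seventeen_eq_zero
      linear_combination hc + ((Z : ZMod 17)) ^ 4 * h0
    -- 17 does not divide W
    have h17W : ¬ (17 : ℤ) ∣ W := by
      intro h17
      have hWc : ((W : ZMod 17)) = 0 := (ZMod.intCast_zmod_eq_zero_iff_dvd W 17).mpr h17
      have hX0 : ((X : ZMod 17)) = 0 := by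
        have h4 : ((X : ZMod 17)) ^ 4 = 0 := by rw [hmod, hWc]; ring
        exact pow_eq_zero_iff (by norm_num : (4:ℕ) ≠ 0) |>.mp h4
      have h17X : (17 : ℤ) ∣ X := (ZMod.intCast_zmod_eq_zero_iff_dvd X 17).mp hX0
      obtain ⟨a, ha⟩ := h17X
      obtain ⟨c, hc⟩ := h17
      have hZ4 : (17 : ℤ) ∣ Z ^ 4 := by
        refine ⟨17 ^ 2 * a ^ 4 - 2 * c ^ 2, ?_⟩
        have h4 : (17 : ℤ) * Z ^ 4 = 17 * (17 * (17 ^ 2 * a ^ 4 - 2 * c ^ 2)) := by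
          rw [ha, hc] at h; linear_combination -h
        linarith [mul_left_cancel₀ (by norm_num : (17:ℤ) ≠ 0) h4]
      have h17Z : (17 : ℤ) ∣ Z := Int.Prime.dvd_pow' (by norm_num) hZ4
      exact hcom 17 (by norm_num) ⟨a, ha⟩ h17Z
    -- every prime divisor of |W| is a square mod 17
    have hWsq : ∀ p : ℕ, p.Prime → p ∣ W.natAbs → IsSquare ((p : ZMod 17)) := by
      intro p pp pd
      have hpW : (p : ℤ) ∣ W := Int.dvd_natAbs.mp (Int.natCast_dvd_natCast.mpr pd)
      by_cases hp2 : p = 2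
      · subst hp2; exact isSquare_two_mod17
      haveI : Fact p.Prime := ⟨pp⟩
      have ppz : Prime (p : ℤ) := Nat.prime_iff_prime_int.mp pp
      have hpZ : ¬ (p : ℤ) ∣ Z := by
        intro hz
        have hx4 : (p : ℤ) ∣ X ^ 4 := by
          have hrw : X ^ 4 = 17 * Z ^ 4 + 2 * W ^ 2 := by linarith
          rw [hrw]
          exact dvd_add (Dvd.dvd.mul_left (dvd_pow hz (by norm_num)) 17)
            (Dvd.dvd.mul_left (dvd_pow hpW (by norm_num)) 2)
        exact hcom p ppz (ppz.dvd_of_dvd_pow hx4) hz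
      have hZb : ((Z : ZMod p)) ≠ 0 := fun h0 =>
        hpZ ((ZMod.intCast_zmod_eq_zero_iff_dvd Z p).mp h0)
      have hWb : ((W : ZMod p)) = 0 := (ZMod.intCast_zmod_eq_zero_iff_dvd W p).mpr hpW
      have hmp : ((X : ZMod p)) ^ 4 = 17 * ((Z : ZMod p)) ^ 4 := by
        have hc := congrArg (fun t : ℤ => ((t : ZMod p))) h
        push_cast at hc
        rw [hWb] at hc
        linear_combination hc
      have hs17 : IsSquare ((17 : ZMod p)) := by
        refine ⟨(X : ZMod p) ^ 2 * (((Z : ZMod p)) ^ 2)⁻¹, ?_⟩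
        have hz2 : ((Z : ZMod p)) ^ 2 ≠ 0 := pow_ne_zero _ hZb
        field_simp
        linear_combination -hmp
      have hs17' : IsSquare (((17 : ℕ)) : ZMod p) := by exact_mod_cast hs17
      exact isSquare_p_mod17 p pp hp2 hs17'
    have hWabs : IsSquare ((W.natAbs : ZMod 17)) := isSquare_17_of_forall_prime _ hWsq
    have h170 := seventeen_eq_zero
    obtain ⟨t, ht⟩ := hWabs
    obtain ⟨m, hm⟩ : ∃ m : ℕ, W.natAbs = m := ⟨_, rfl⟩
    rw [hm] at ht
    have hWsq17 : ∃ s : ZMod 17, ((W : ZMod 17)) = s * s := by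
      rcases Int.natAbs_eq W with hW | hW <;> rw [hm] at hW
      · refine ⟨t, ?_⟩
        rw [hW]
        push_cast
        exact ht
      · refine ⟨4 * t, ?_⟩
        have hneg : ((W : ZMod 17)) = -((m : ℕ) : ZMod 17) := by
          rw [hW]; push_cast; ring
        rw [hneg, ht]
        linear_combination (-(t * t)) * h170
    obtain ⟨s, hs⟩ := hWsq17
    have hWb0 : ((W : ZMod 17)) ≠ 0 := fun h0 =>
      h17W ((ZMod.intCast_zmod_eq_zero_iff_dvd W 17).mp h0)
    have hs0 : s ≠ 0 := by rintro rfl; rw [mul_zero] at hs; exact hWb0 hs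
    have hone : (s * s) ^ 2 * s⁻¹ ^ 4 = 1 := by
      have h4 : (s * s) ^ 2 = s ^ 4 := by ring
      rw [h4, ← mul_pow, mul_inv_cancel₀ hs0, one_pow]
    have hfin : (((X : ZMod 17)) * s⁻¹) ^ 4 = 2 := by
      rw [mul_pow, hmod, hs]
      calc 2 * (s * s) ^ 2 * s⁻¹ ^ 4 = 2 * ((s * s) ^ 2 * s⁻¹ ^ 4) := by ring
        _ = 2 := by rw [hone, mul_one]
    exact two_not_fourth_power _ hfin

/-- Schinzel's theorem: the Schinzel quartic `x⁴ − 17z⁴ = 2(y² + 4z²)²`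
has no rational point. -/
theorem schinzel_no_rational_point :
    ∀ x y z : ℚ, x ^ 4 - 17 * z ^ 4 = 2 * (y ^ 2 + 4 * z ^ 2) ^ 2 →
      x = 0 ∧ y = 0 ∧ z = 0 := by
  intro x y z h
  set X : ℤ := x.num * y.den * z.den with hX
  set Y : ℤ := y.num * x.den * z.den with hY
  set Z : ℤ := z.num * x.den * y.den with hZ
  have hxd : ((x.den : ℚ)) ≠ 0 := by exact_mod_cast x.den_nz
  have hyd : ((y.den : ℚ)) ≠ 0 := by exact_mod_cast y.den_nz
  have hzd : ((z.den : ℚ)) ≠ 0 := by exact_mod_cast z.den_nz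
  have hxn : (x.num : ℚ) = x * x.den := by
    have hd := Rat.num_div_den x
    rw [div_eq_iff hxd] at hd
    exact hd
  have hyn : (y.num : ℚ) = y * y.den := by
    have hd := Rat.num_div_den y
    rw [div_eq_iff hyd] at hd
    exact hd
  have hzn : (z.num : ℚ) = z * z.den := by
    have hd := Rat.num_div_den z
    rw [div_eq_iff hzd] at hd
    exact hd
  have hQ : (X : ℚ) ^ 4 - 17 * (Z : ℚ) ^ 4 = 2 * ((Y : ℚ) ^ 2 + 4 * (Z : ℚ) ^ 2) ^ 2 := by
    rw [hX, hY, hZ]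
    push_cast
    rw [hxn, hyn, hzn]
    linear_combination ((x.den : ℚ) * (y.den : ℚ) * (z.den : ℚ)) ^ 4 * h
  have hI : X ^ 4 - 17 * Z ^ 4 = 2 * (Y ^ 2 + 4 * Z ^ 2) ^ 2 := by exact_mod_cast hQ
  have hW0 : Y ^ 2 + 4 * Z ^ 2 = 0 :=
    schinzel_int (Y ^ 2 + 4 * Z ^ 2).natAbs (Y ^ 2 + 4 * Z ^ 2) X Z rfl hI
  have hY0 : Y = 0 := by nlinarith [sq_nonneg Y, sq_nonneg Z]
  have hZ0 : Z = 0 := by nlinarith [sq_nonneg Y, sq_nonneg Z]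
  have hxdz : ((x.den : ℤ)) ≠ 0 := by exact_mod_cast x.den_nz
  have hydz : ((y.den : ℤ)) ≠ 0 := by exact_mod_cast y.den_nz
  have hzdz : ((z.den : ℤ)) ≠ 0 := by exact_mod_cast z.den_nz
  have hy0 : y = 0 := by
    have h0 : y.num = 0 := by
      rcases mul_eq_zero.mp (hY ▸ hY0) with h' | h'
      · rcases mul_eq_zero.mp h' with h'' | h''
        · exact h''
        · exact absurd h'' hxdz
      · exact absurd h' hzdz
    exact Rat.num_eq_zero.mp h0
  have hz0 : z = 0 := by
    have h0 : z.num = 0 := by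
      rcases mul_eq_zero.mp (hZ ▸ hZ0) with h' | h'
      · rcases mul_eq_zero.mp h' with h'' | h''
        · exact h''
        · exact absurd h'' hxdz
      · exact absurd h' hydz
    exact Rat.num_eq_zero.mp h0
  have hx0 : x = 0 := by
    rw [hy0, hz0] at h
    have h4 : x ^ 4 = 0 := by linarith [h]
    exact pow_eq_zero_iff (by norm_num : (4:ℕ) ≠ 0) |>.mp h4
  exact ⟨hx0, hy0, hz0⟩
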